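/- arXiv:math/0111120 — 4 statements merged into one kernel-verified Lean document; each statement's English description precedes it below -/
import Mathlib

section
/- For z ∈ (0,1) and all natural numbers n, the Chebyshev polynomial of the first kind satisfies T_n((1+z)/(1−z)) ≥ ½·((1+√z)/(1−√z))ⁿ. -/
open Polynomial Chebyshev in
lemma cheb_eval_aux (a : ℝ) (ha : a ≠ 0) : ∀ n : ℕ,
    (Polynomial.Chebyshev.T ℝ n).eval ((a + a⁻¹)/2) = (a^n + a⁻¹^n)/2 := by
  intro n
  induction n using Nat.twoStepInduction with
  | zero => simp
  | one => simp [Polynomial.Chebyshev.T_one]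
  | more n ih1 ih2 =>
    have : ((n:ℤ) + 2) = ((n+2 : ℕ) : ℤ) := by push_cast; ring
    rw [← this, Polynomial.Chebyshev.T_add_two]
    push_cast at ih1 ih2 ⊢
    simp only [Polynomial.eval_sub, Polynomial.eval_mul, Polynomial.eval_ofNat,
      Polynomial.eval_X, ih1, ih2]
    field_simp
    linear_combination (a⁻¹ ^ n * (a - a⁻¹)) * (mul_inv_cancel₀ ha)

/-- For `z ∈ (0,1)`, `T_n((1+z)/(1−z)) ≥ ½·((1+√z)/(1−√z))ⁿ`. -/
theorem chebyshev_T_ge (n : ℕ) (z : ℝ) (hz : z ∈ Set.Ioo (0 : ℝ) 1) :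
    (1 / 2) * ((1 + Real.sqrt z) / (1 - Real.sqrt z)) ^ n ≤
      (Polynomial.Chebyshev.T ℝ n).eval ((1 + z) / (1 - z)) := by
  obtain ⟨hz0, hz1⟩ := hz
  set s := Real.sqrt z with hs
  have hs0 : 0 < s := Real.sqrt_pos.mpr hz0
  have hs1 : s < 1 := by
    rw [hs, show (1:ℝ) = Real.sqrt 1 by simp]
    exact Real.sqrt_lt_sqrt hz0.le hz1
  have hsz : s ^ 2 = z := Real.sq_sqrt hz0.le
  set a := (1 + s) / (1 - s) with ha
  have ha1 : 1 < a := by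
    rw [ha, lt_div_iff₀ (by linarith)]; linarith
  have ha0 : a ≠ 0 := by linarith
  have hx : (1 + z) / (1 - z) = (a + a⁻¹) / 2 := by
    have h1 : (1:ℝ) - s ≠ 0 := by linarith
    have h2 : (1:ℝ) + s ≠ 0 := by linarith
    have h3 : (1:ℝ) - z ≠ 0 := by linarith
    have h4 : (1:ℝ) - s^2 ≠ 0 := by rw [hsz]; exact h3
    rw [ha, ← hsz, inv_div]
    field_simp
    ring
  rw [hx, cheb_eval_aux a ha0 n]
  have h1 : 0 ≤ a⁻¹ ^ n := by positivity
  have h2 : a ^ n = ((1 + s) / (1 - s)) ^ n := by rw [ha]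
  linarith
end

section
/- Fix z ∈ (0,1) and n ∈ ℕ, and let p_n be as defined via the Chebyshev polynomial (p_n(x) = (T_n(l(x))+1)/(T_n(l(0))+1) with l(x) = (−2/(1−z))x + (1+z)/(1−z)). Then for every x ∈ [z,1], p_n(x) ≤ 2/T_n((1+z)/(1−z)) ≤ 4·e^(−2n√z). -/
open Polynomial

/-- The affine map `l(x) = (−2/(1−z))x + (1+z)/(1−z)` as a polynomial. -/
noncomputable def lPoly (z : ℝ) : ℝ[X] := C (-2 / (1 - z)) * X + C ((1 + z) / (1 - z))

/-- The transformed Chebyshev polynomial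
`p_n(x) = (T_n(l(x)) + 1)/(T_n(l(0)) + 1)`; note `l(0) = (1+z)/(1−z)`. -/
noncomputable def pPoly (n : ℕ) (z : ℝ) : ℝ[X] :=
  C (((Polynomial.Chebyshev.T ℝ n).eval ((1 + z) / (1 - z)) + 1)⁻¹) *
    ((Polynomial.Chebyshev.T ℝ n).comp (lPoly z) + 1)

open Real in
lemma T_real_cosh (t : ℝ) (n : ℤ) :
    (Polynomial.Chebyshev.T ℝ n).eval (Real.cosh t) = Real.cosh (n * t) := by
  have h := Polynomial.Chebyshev.T_complex_cos ((t : ℂ) * Complex.I) n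
  rw [Complex.cos_mul_I] at h
  have h2 : (n : ℂ) * ((t : ℂ) * Complex.I) = ((n * t : ℝ) : ℂ) * Complex.I := by push_cast; ring
  rw [h2, Complex.cos_mul_I, ← Complex.ofReal_cosh, ← Complex.ofReal_cosh,
    ← Polynomial.Chebyshev.complex_ofReal_eval_T] at h
  exact_mod_cast h

lemma exp_two_mul_le (s : ℝ) (hs : 0 ≤ s) : (1 - s) * Real.exp (2 * s) ≤ 1 + s := by
  set f : ℝ → ℝ := fun s => (1 + s) * Real.exp (-2 * s) - (1 - s) with hf
  have hd : ∀ x : ℝ, HasDerivAt f (Real.exp (-2*x) + (1+x) * (Real.exp (-2*x) * (-2)) + 1) x := by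
    intro x
    have h1 : HasDerivAt (fun y : ℝ => Real.exp (-2 * y)) (Real.exp (-2*x) * (-2)) x := by
      have := ((hasDerivAt_id x).const_mul (-2 : ℝ)).exp
      simpa [mul_comm] using this
    have h2 : HasDerivAt (fun y : ℝ => 1 + y) 1 x := by
      simpa using (hasDerivAt_id x).const_add (1 : ℝ)
    have h3 := (h2.mul h1)
    have h4 : HasDerivAt (fun y : ℝ => 1 - y) (-1) x := by
      exact (hasDerivAt_id x).const_sub (1 : ℝ)
    exact (h3.sub h4).congr_deriv (by ring)
  have hmono : MonotoneOn f (Set.Ici (0:ℝ)) := by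
    apply monotoneOn_of_deriv_nonneg (convex_Ici 0)
      (Continuous.continuousOn (by fun_prop))
      (fun x _ => (hd x).differentiableAt.differentiableWithinAt)
    intro x hx
    rw [(hd x).deriv]
    have hx0 : 0 ≤ x := le_of_lt (by simpa using hx)
    have : (1 + 2*x) * Real.exp (-2*x) ≤ 1 := by
      have h5 : (1 + 2*x) * Real.exp (-2*x) ≤ Real.exp (2*x) * Real.exp (-2*x) :=
        mul_le_mul_of_nonneg_right (by linarith [Real.add_one_le_exp (2*x)]) (Real.exp_pos _).le
      rw [← Real.exp_add] at h5
      simpa using h5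
    nlinarith [Real.exp_pos (-2*x)]
  have h0 : f 0 = 0 := by simp [hf]
  have := hmono (Set.self_mem_Ici) (Set.mem_Ici.mpr hs) hs
  rw [h0] at this
  have key : 1 - s ≤ (1 + s) * Real.exp (-2 * s) := by simpa [hf, sub_nonneg] using this
  have hepos := Real.exp_pos (2*s)
  calc (1 - s) * Real.exp (2*s) ≤ ((1 + s) * Real.exp (-2 * s)) * Real.exp (2*s) := by
        apply mul_le_mul_of_nonneg_right key hepos.le
    _ = 1 + s := by rw [mul_assoc, ← Real.exp_add]; simp

theorem pPoly_le_on_Icc (n : ℕ) (z : ℝ) (hz : z ∈ Set.Ioo (0 : ℝ) 1) :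
    (∀ x ∈ Set.Icc z 1,
      (pPoly n z).eval x ≤ 2 / (Polynomial.Chebyshev.T ℝ n).eval ((1 + z) / (1 - z))) ∧
    2 / (Polynomial.Chebyshev.T ℝ n).eval ((1 + z) / (1 - z)) ≤
      4 * Real.exp (-2 * n * Real.sqrt z) := by
  obtain ⟨hz0, hz1⟩ := hz
  have h1z : (0:ℝ) < 1 - z := by linarith
  set s := Real.sqrt z with hsdef
  have hs0 : 0 < s := Real.sqrt_pos.mpr hz0
  have hsz : s ^ 2 = z := Real.sq_sqrt hz0.le
  have hs1 : s < 1 := by nlinarith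
  set t := Real.log ((1 + s) / (1 - s)) with htdef
  have hfrac : 0 < (1 + s) / (1 - s) := div_pos (by linarith) (by linarith)
  have het : Real.exp t = (1 + s) / (1 - s) := Real.exp_log hfrac
  have hcosh : Real.cosh t = (1 + z) / (1 - z) := by
    rw [Real.cosh_eq, Real.exp_neg, het]
    have step : ((1+s)/(1-s) + ((1+s)/(1-s))⁻¹)/2 = (1+s^2)/(1-s^2) := by
      rw [inv_div]
      have h1 : (1:ℝ) - s ≠ 0 := by linarith
      have h2 : (1:ℝ) + s ≠ 0 := by linarith
      have h3 : (1:ℝ) - s^2 ≠ 0 := by nlinarith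
      field_simp
      ring
    rw [step, hsz]
  have hT : (Polynomial.Chebyshev.T ℝ n).eval ((1 + z) / (1 - z)) = Real.cosh (n * t) := by
    rw [← hcosh]
    have := T_real_cosh t (n : ℤ)
    push_cast at this ⊢
    exact this
  have ht2s : 2 * s ≤ t := by
    have h1 := exp_two_mul_le s hs0.le
    have h2 : Real.exp (2 * s) ≤ Real.exp t := by
      rw [het, le_div_iff₀ (by linarith)]
      linarith [mul_comm (1 - s) (Real.exp (2 * s))]
    exact Real.exp_le_exp.mp h2
  have hTlow : Real.exp (2 * n * s) / 2 ≤ Real.cosh (n * t) := by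
    have h1 : Real.exp (n * t) / 2 ≤ Real.cosh (n * t) := by
      rw [Real.cosh_eq]
      have := (Real.exp_pos (-(n * t))).le
      linarith
    have h2 : Real.exp (2 * n * s) ≤ Real.exp (n * t) := by
      apply Real.exp_le_exp.mpr
      have hn : (0:ℝ) ≤ n := Nat.cast_nonneg n
      calc 2 * n * s = n * (2 * s) := by ring
        _ ≤ n * t := mul_le_mul_of_nonneg_left ht2s hn
    linarith
  have hT1 : (1:ℝ) ≤ Real.cosh (n * t) := Real.one_le_cosh _
  have hTpos : 0 < (Polynomial.Chebyshev.T ℝ n).eval ((1 + z) / (1 - z)) := by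
    rw [hT]; linarith
  constructor
  · intro x hx
    obtain ⟨hx1, hx2⟩ := hx
    have heval : (pPoly n z).eval x =
        ((Polynomial.Chebyshev.T ℝ n).eval ((1 + z) / (1 - z)) + 1)⁻¹ *
          ((Polynomial.Chebyshev.T ℝ n).eval ((1 + z - 2 * x) / (1 - z)) + 1) := by
      simp only [pPoly, lPoly, eval_mul, eval_add, eval_C, eval_X, eval_comp, eval_one]
      ring_nf
    set y := (1 + z - 2 * x) / (1 - z) with hydef
    have hy1 : -1 ≤ y := by rw [hydef, le_div_iff₀ h1z]; linarith
    have hy2 : y ≤ 1 := by rw [hydef, div_le_one h1z]; linarith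
    have hTy : (Polynomial.Chebyshev.T ℝ n).eval y ≤ 1 := by
      rw [← Real.cos_arccos hy1 hy2, Polynomial.Chebyshev.T_real_cos]
      exact Real.cos_le_one _
    rw [heval]
    set T := (Polynomial.Chebyshev.T ℝ n).eval ((1 + z) / (1 - z)) with hTdef
    have hT1' : (1:ℝ) ≤ T := by rw [hT]; exact hT1
    rw [inv_mul_eq_div, div_le_div_iff₀ (by linarith) hTpos]
    nlinarith [hTpos, hTy]
  · rw [hT, div_le_iff₀ (by linarith : (0:ℝ) < Real.cosh (n * t))]
    have h1 : 4 * Real.exp (-2 * n * s) * (Real.exp (2 * n * s) / 2) ≤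
        4 * Real.exp (-2 * n * s) * Real.cosh (n * t) :=
      mul_le_mul_of_nonneg_left hTlow (by positivity)
    have h2 : 4 * Real.exp (-2 * n * s) * (Real.exp (2 * n * s) / 2) = 2 := by
      rw [show (4:ℝ) * Real.exp (-2 * ↑n * s) * (Real.exp (2 * ↑n * s) / 2)
          = 2 * (Real.exp (-2 * ↑n * s) * Real.exp (2 * ↑n * s)) from by ring, ← Real.exp_add,
        show -2 * (n:ℝ) * s + 2 * n * s = 0 from by ring, Real.exp_zero]
      norm_num
    linarith [h1, h2.symm.le.trans h1]
end

section
/- Let μ be a probability measure on [0,1] such that μ([0,z]) = 0 for all z < λ₀/K, where 0 < λ₀/K < 1. Then J(n,μ) ≤ 4·e^(−2n√(λ₀/K)) for all n. -/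
open MeasureTheory

/-- `J(n,μ)` : infimum of `∫₀¹ p dμ` over polynomials `p` of degree at most `n`
with `p(0) = 1` and `p ≥ 0` on `[0,1]`. -/
noncomputable def J (n : ℕ) (μ : Measure ℝ) : ℝ :=
  sInf {r : ℝ | ∃ p : Polynomial ℝ, p.natDegree ≤ n ∧ p.eval 0 = 1 ∧
    (∀ x ∈ Set.Icc (0 : ℝ) 1, 0 ≤ p.eval x) ∧
    r = ∫ x in Set.Icc (0 : ℝ) 1, p.eval x ∂μ}

section ChebHelpers
open Polynomial Polynomial.Chebyshev

open Polynomial Polynomial.Chebyshev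

lemma cheb_deg (n : ℕ) : (T ℝ n).natDegree ≤ n := by
  induction n using Nat.twoStepInduction with
  | zero => simp [T_zero]
  | one => simp [T_one]
  | more k ih1 ih2 =>
    have h : T ℝ ((k:ℤ) + 2) = 2 * X * T ℝ (k + 1) - T ℝ k := T_add_two ℝ k
    have : ((k + 2 : ℕ) : ℤ) = (k : ℤ) + 2 := by push_cast; ring
    rw [this, h]
    refine le_trans (natDegree_sub_le _ _) ?_
    have h1 : (2 * X * T ℝ ((k:ℤ) + 1)).natDegree ≤ k + 2 := by
      refine le_trans (natDegree_mul_le) ?_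
      have : (((k + 1 : ℕ)) : ℤ) = (k : ℤ) + 1 := by push_cast; ring
      have h2 := ih2
      rw [this] at h2
      have : (2 * X : ℝ[X]).natDegree ≤ 1 := by
        refine le_trans natDegree_mul_le ?_; simp
      omega
    have h2 : (T ℝ (k:ℤ)).natDegree ≤ k + 2 := le_trans ih1 (by omega)
    omega

lemma cheb_neg (n : ℕ) (x : ℝ) :
    (T ℝ n).eval (-x) = (-1)^n * (T ℝ n).eval x := by
  induction n using Nat.twoStepInduction generalizing x with
  | zero => simp [T_zero]
  | one => simp [T_one]
  | more k ih1 ih2 =>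
    have h : T ℝ ((k:ℤ) + 2) = 2 * X * T ℝ (k + 1) - T ℝ k := T_add_two ℝ k
    have hc : ((k + 2 : ℕ) : ℤ) = (k : ℤ) + 2 := by push_cast; ring
    have hc1 : ((k + 1 : ℕ) : ℤ) = (k : ℤ) + 1 := by push_cast; ring
    rw [hc, h]
    simp only [eval_sub, eval_mul, eval_ofNat, eval_X]
    rw [← hc1, ih2, ih1]
    ring

lemma cheb_cosh (n : ℕ) (t : ℝ) :
    (T ℝ n).eval (Real.cosh t) = Real.cosh (n * t) := by
  induction n using Nat.twoStepInduction with
  | zero => simp [T_zero]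
  | one => simp [T_one]
  | more k ih1 ih2 =>
    have h : T ℝ ((k:ℤ) + 2) = 2 * X * T ℝ (k + 1) - T ℝ k := T_add_two ℝ k
    have hc : ((k + 2 : ℕ) : ℤ) = (k : ℤ) + 2 := by push_cast; ring
    have hc1 : ((k + 1 : ℕ) : ℤ) = (k : ℤ) + 1 := by push_cast; ring
    rw [hc, h]
    simp only [eval_sub, eval_mul, eval_ofNat, eval_X]
    rw [← hc1, ih2, ih1]
    have e1 : ((k:ℝ) + 2) * t = ((k+1:ℝ)*t) + t := by ring
    have e2 : (k:ℝ) * t = ((k+1:ℝ)*t) - t := by ring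
    push_cast
    rw [e1, e2, Real.cosh_add, Real.cosh_sub]
    ring

lemma cheb_cos (n : ℕ) (t : ℝ) :
    (T ℝ n).eval (Real.cos t) = Real.cos (n * t) := by
  exact_mod_cast Polynomial.Chebyshev.T_real_cos t n


lemma exp_two_le (s : ℝ) (h0 : 0 ≤ s) (h1 : s < 1) :
    Real.exp (2*s) * (1 - s) ≤ 1 + s := by
  set g : ℝ → ℝ := fun x => (1+x) - (1-x)*Real.exp (2*x) with hg
  have hderiv : ∀ x : ℝ, HasDerivAt g (1 - (1-2*x)*Real.exp (2*x)) x := by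
    intro x
    have h1' : HasDerivAt (fun x : ℝ => 1+x) 1 x := by
      simpa using (hasDerivAt_id x).const_add 1
    have h2' : HasDerivAt (fun x : ℝ => Real.exp (2*x)) (Real.exp (2*x) * 2) x := by
      have := (hasDerivAt_id x).const_mul (2:ℝ)
      exact (Real.hasDerivAt_exp (2*x)).comp x (by simpa using this)
    have h3' : HasDerivAt (fun x : ℝ => 1-x) (-1) x := by
      simpa using (hasDerivAt_id x).const_sub (1:ℝ)
    have h4' := h3'.mul h2'
    have := h1'.sub h4'
    refine this.congr_deriv ?_
    ring
  have hmono : Monotone g := by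
    refine monotone_of_deriv_nonneg (fun x => (hderiv x).differentiableAt) ?_
    intro x
    rw [(hderiv x).deriv]
    have : 1 - 2*x ≤ Real.exp (-(2*x)) := by
      have := Real.add_one_le_exp (-(2*x)); linarith
    have h5 : (1-2*x)*Real.exp (2*x) ≤ Real.exp (-(2*x)) * Real.exp (2*x) := by
      exact mul_le_mul_of_nonneg_right this (Real.exp_pos _).le
    rw [← Real.exp_add] at h5
    simp at h5
    linarith
  have := hmono h0
  simp [hg] at this
  linarith

lemma exists_cosh (y : ℝ) (hy : 1 ≤ y) : ∃ t : ℝ, Real.cosh t = y := by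
  refine ⟨Real.log (y + Real.sqrt (y^2 - 1)), ?_⟩
  have hs : Real.sqrt (y^2-1) ^ 2 = y^2 - 1 := Real.sq_sqrt (by nlinarith)
  have hpos : 0 < y + Real.sqrt (y^2-1) := by
    have := Real.sqrt_nonneg (y^2-1); linarith
  rw [Real.cosh_log hpos]
  have hmul : (y + Real.sqrt (y^2-1)) * (y - Real.sqrt (y^2-1)) = 1 := by nlinarith
  have hinv : (y + Real.sqrt (y^2-1))⁻¹ = y - Real.sqrt (y^2-1) :=
    inv_eq_of_mul_eq_one_right hmul
  rw [hinv]; ring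

lemma ell_mem (a x : ℝ) (ha : a < 1) (hxa : a ≤ x) (hx1 : x ≤ 1) :
    -1 ≤ 2/(1-a)*x - (1+a)/(1-a) ∧ 2/(1-a)*x - (1+a)/(1-a) ≤ 1 := by
  have h1a : (0:ℝ) < 1 - a := by linarith
  constructor
  · rw [div_mul_eq_mul_div, div_sub_div _ _ h1a.ne' h1a.ne', le_div_iff₀ (by positivity)]
    nlinarith
  · rw [div_mul_eq_mul_div, div_sub_div _ _ h1a.ne' h1a.ne', div_le_iff₀ (by positivity)]
    nlinarith

lemma ell_le (a x : ℝ) (ha : a < 1) (hxa : x ≤ a) :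
    1 ≤ (1+a)/(1-a) - 2/(1-a)*x := by
  have h1a : (0:ℝ) < 1 - a := by linarith
  rw [div_mul_eq_mul_div, div_sub_div _ _ h1a.ne' h1a.ne', le_div_iff₀ (by positivity)]
  nlinarith

end ChebHelpers

open Polynomial Polynomial.Chebyshev in
set_option maxHeartbeats 1000000 in
/-- Spectral gap case: if `μ` has no mass in `[0, λ₀/K)` then
`J(n,μ) ≤ 4·e^(−2n√(λ₀/K))`. -/
theorem J_le_of_gap (μ : Measure ℝ) [IsProbabilityMeasure μ]
    (hμ : μ (Set.Icc (0 : ℝ) 1)ᶜ = 0)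
    (lam0 K : ℝ) (h0 : 0 < lam0 / K) (h1 : lam0 / K < 1)
    (hgap : ∀ z < lam0 / K, μ (Set.Icc 0 z) = 0) (n : ℕ) :
    J n μ ≤ 4 * Real.exp (-2 * n * Real.sqrt (lam0 / K)) := by
  set a := lam0 / K with ha
  set s := Real.sqrt a with hs
  have hs0 : 0 < s := Real.sqrt_pos.2 h0
  have hs1 : s < 1 := by
    rw [hs, show (1:ℝ) = Real.sqrt 1 by simp]
    exact Real.sqrt_lt_sqrt h0.le h1
  have hsa : s^2 = a := Real.sq_sqrt h0.le
  set r := (1+s)/(1-s) with hr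
  set θ := Real.log r with hθ
  have hcoshθ : Real.cosh θ = (1+a)/(1-a) := by
    rw [hθ, Real.cosh_log (by rw [hr]; exact div_pos (by linarith) (by linarith))]
    rw [hr, inv_div]
    rw [div_add_div _ _ (by linarith) (by linarith), div_div]
    rw [div_eq_div_iff (by nlinarith) (by nlinarith)]
    nlinarith [hsa]
  have hθ2s : 2*s ≤ θ := by
    have hexp : Real.exp (2*s) ≤ r := by
      rw [hr, le_div_iff₀ (by linarith)]
      exact exp_two_le s hs0.le hs1
    calc 2*s = Real.log (Real.exp (2*s)) := (Real.log_exp _).symm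
      _ ≤ Real.log r := Real.log_le_log (Real.exp_pos _) hexp
  set D := Real.cosh (n*θ) + 1 with hD
  have hD1 : 2 ≤ D := by have := Real.one_le_cosh (n*θ); linarith
  have hDpos : 0 < D := by linarith
  have ha1 : a < 1 := h1
  set b := (2:ℝ)/(1-a) with hb
  set c := (1+a)/(1-a) with hc
  have hbpos : 0 < b := by rw [hb]; exact div_pos (by linarith) (by linarith)
  set L : Polynomial ℝ := Polynomial.C b * Polynomial.X - Polynomial.C c with hL
  set P : Polynomial ℝ :=
    Polynomial.C D⁻¹ * (Polynomial.C ((-1:ℝ)^n) * ((T ℝ n).comp L) + 1) with hP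
  have hPeval : ∀ x : ℝ,
      P.eval x = D⁻¹ * ((-1:ℝ)^n * (T ℝ n).eval (b*x - c) + 1) := by
    intro x; simp [hP, hL]
  clear_value a s r θ D b c L P
  -- pointwise bounds
  have hlb : ∀ x ∈ Set.Icc (0:ℝ) 1, -1 ≤ (-1:ℝ)^n * (T ℝ n).eval (b*x - c) := by
    rintro x ⟨hx0, hx1⟩
    by_cases hxa : a ≤ x
    · have hy1 : -1 ≤ b*x - c := by
        rw [hb, hc, div_mul_eq_mul_div, div_sub_div _ _ (by linarith) (by linarith)]
        rw [le_div_iff₀ (by nlinarith)]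
        nlinarith
      have hy2 : b*x - c ≤ 1 := by
        rw [hb, hc, div_mul_eq_mul_div, div_sub_div _ _ (by linarith) (by linarith)]
        rw [div_le_iff₀ (by nlinarith)]
        nlinarith
      have hcos : Real.cos (Real.arccos (b*x - c)) = b*x - c := Real.cos_arccos hy1 hy2
      have hval : (T ℝ n).eval (b*x - c) = Real.cos (n * Real.arccos (b*x - c)) := by
        have h' := cheb_cos n (Real.arccos (b*x - c)); rw [hcos] at h'; exact h'
      have habs : |(T ℝ n).eval (b*x - c)| ≤ 1 := by
        rw [hval]; exact Real.abs_cos_le_one _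
      have : |(-1:ℝ)^n * (T ℝ n).eval (b*x - c)| ≤ 1 := by
        rw [abs_mul, abs_pow, abs_neg, abs_one, one_pow, one_mul]; exact habs
      have := abs_le.1 this
      linarith [this.1]
    · push_neg at hxa
      have hy : 1 ≤ c - b*x := by
        rw [hb, hc]; exact ell_le a x ha1 hxa.le
      obtain ⟨t, ht⟩ := exists_cosh _ hy
      have : (T ℝ n).eval (b*x - c) = (-1:ℝ)^n * Real.cosh (n*t) := by
        have : b*x - c = -(c - b*x) := by ring
        rw [this, ← ht, cheb_neg, cheb_cosh]
      rw [this]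
      have hpow : ((-1:ℝ)^n) * ((-1:ℝ)^n) = 1 := by
        rw [← pow_add]; exact (neg_one_pow_eq_one_iff_even (by norm_num)).2 ⟨n, by ring⟩
      rw [← mul_assoc, hpow, one_mul]
      have := Real.one_le_cosh (n*t)
      linarith
  have hub : ∀ x ∈ Set.Icc a 1, (-1:ℝ)^n * (T ℝ n).eval (b*x - c) ≤ 1 := by
    rintro x ⟨hxa, hx1⟩
    have hy1 : -1 ≤ b*x - c := by
      rw [hb, hc]; exact (ell_mem a x ha1 hxa hx1).1
    have hy2 : b*x - c ≤ 1 := by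
      rw [hb, hc]; exact (ell_mem a x ha1 hxa hx1).2
    have hcos : Real.cos (Real.arccos (b*x - c)) = b*x - c := Real.cos_arccos hy1 hy2
    have hval : (T ℝ n).eval (b*x - c) = Real.cos (n * Real.arccos (b*x - c)) := by
      have h' := cheb_cos n (Real.arccos (b*x - c)); rw [hcos] at h'; exact h'
    have habs : |(T ℝ n).eval (b*x - c)| ≤ 1 := by
      rw [hval]; exact Real.abs_cos_le_one _
    have : |(-1:ℝ)^n * (T ℝ n).eval (b*x - c)| ≤ 1 := by
      rw [abs_mul, abs_pow, abs_neg, abs_one, one_pow, one_mul]; exact habs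
    linarith [(abs_le.1 this).2]
  -- properties of P
  have hPdeg : P.natDegree ≤ n := by
    rw [hP]
    refine le_trans natDegree_mul_le ?_
    rw [natDegree_C, zero_add]
    refine le_trans (natDegree_add_le _ _) ?_
    simp only [natDegree_one, max_le_iff]
    constructor
    · refine le_trans natDegree_mul_le ?_
      rw [natDegree_C, zero_add]
      refine le_trans (natDegree_comp_le) ?_
      have hTL : L.natDegree ≤ 1 := by
        rw [hL]
        refine le_trans (natDegree_sub_le _ _) ?_
        simp only [natDegree_C, max_le_iff]
        exact ⟨le_trans natDegree_mul_le (by simp), by norm_num⟩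
      calc (T ℝ n).natDegree * L.natDegree ≤ n * 1 :=
            Nat.mul_le_mul (cheb_deg n) hTL
        _ = n := by ring
    · exact Nat.zero_le n
  have hP0 : P.eval 0 = 1 := by
    rw [hPeval]
    have : b*0 - c = -Real.cosh θ := by rw [hcoshθ]; ring
    rw [this, cheb_neg, cheb_cosh]
    have hpow : ((-1:ℝ)^n) * ((-1:ℝ)^n) = 1 := by
      rw [← pow_add]; exact (neg_one_pow_eq_one_iff_even (by norm_num)).2 ⟨n, by ring⟩
    rw [← mul_assoc, hpow, one_mul]
    rw [← hD]
    field_simp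
  have hPnonneg : ∀ x ∈ Set.Icc (0:ℝ) 1, 0 ≤ P.eval x := by
    intro x hx
    rw [hPeval]
    have := hlb x hx
    have h2 : (0:ℝ) ≤ (-1:ℝ)^n * (T ℝ n).eval (b*x - c) + 1 := by linarith
    positivity
  -- measure facts
  have hμIcc : μ (Set.Icc (0:ℝ) 1) = 1 := by
    have hle : μ Set.univ ≤ μ (Set.Icc (0:ℝ) 1) + μ (Set.Icc (0:ℝ) 1)ᶜ := by
      rw [← Set.union_compl_self (Set.Icc (0:ℝ) 1)]; exact measure_union_le _ _
    rw [hμ, add_zero, measure_univ] at hle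
    exact le_antisymm prob_le_one hle
  have hnull : μ (Set.Ico (0:ℝ) a) = 0 := by
    have hsub : Set.Ico (0:ℝ) a ⊆ ⋃ k : ℕ, Set.Icc (0:ℝ) (a - 1/(k+1)) := by
      rintro x ⟨hx0, hxa⟩
      obtain ⟨k, hk⟩ := exists_nat_one_div_lt (show (0:ℝ) < a - x by linarith)
      exact Set.mem_iUnion.2 ⟨k, hx0, by push_cast at hk ⊢; linarith⟩
    refine measure_mono_null hsub (measure_iUnion_null fun k => hgap _ ?_)
    have : (0:ℝ) < 1/(k+1) := by positivity
    linarith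
  have hres : (μ.restrict (Set.Icc (0:ℝ) 1)) (Set.Icc a 1)ᶜ = 0 := by
    rw [Measure.restrict_apply measurableSet_Icc.compl]
    refine measure_mono_null ?_ hnull
    rintro x ⟨hxc, hx0, hx1⟩
    refine ⟨hx0, ?_⟩
    by_contra hcon
    push_neg at hcon
    exact hxc ⟨hcon, hx1⟩
  have hae : ∀ᵐ x ∂(μ.restrict (Set.Icc (0:ℝ) 1)), P.eval x ≤ 2/D := by
    have hmem : ∀ᵐ x ∂(μ.restrict (Set.Icc (0:ℝ) 1)), x ∈ Set.Icc a 1 := by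
      rw [ae_iff]
      exact hres
    filter_upwards [hmem] with x hx
    rw [hPeval]
    have := hub x hx
    have h2 : (-1:ℝ)^n * (T ℝ n).eval (b*x - c) + 1 ≤ 2 := by linarith
    calc D⁻¹ * ((-1:ℝ)^n * (T ℝ n).eval (b*x - c) + 1) ≤ D⁻¹ * 2 :=
          mul_le_mul_of_nonneg_left h2 (by positivity)
      _ = 2/D := by rw [div_eq_mul_inv]; ring
  have hint : IntegrableOn (fun x => P.eval x) (Set.Icc (0:ℝ) 1) μ :=
    (P.continuous_aeval).continuousOn.integrableOn_compact isCompact_Icc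
  have hIle : (∫ x in Set.Icc (0:ℝ) 1, P.eval x ∂μ) ≤ 2/D := by
    have := integral_mono_ae hint (integrable_const (2/D)) hae
    rwa [integral_const, measureReal_restrict_apply_univ, measureReal_def, hμIcc, ENNReal.toReal_one,
      one_smul] at this
  have hfinal : 2/D ≤ 4 * Real.exp (-2 * n * s) := by
    have hcosh : Real.exp (n*θ) / 2 ≤ Real.cosh (n*θ) := by
      rw [Real.cosh_eq]
      have := Real.exp_pos (-(n*θ))
      linarith
    have hDlb : Real.exp (n*θ) / 2 ≤ D := by rw [hD]; linarith
    have hmono : Real.exp (-(n*θ)) ≤ Real.exp (-2 * n * s) := by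
      apply Real.exp_le_exp.2
      have : 2 * (n:ℝ) * s ≤ (n:ℝ) * θ := by
        rcases Nat.eq_zero_or_pos n with h | h
        · simp [h]
        · have hn : (1:ℝ) ≤ n := by exact_mod_cast h
          nlinarith
      linarith
    rw [div_le_iff₀ hDpos]
    have hmul : Real.exp (-(n*θ)) * Real.exp (n*θ) = 1 := by
      rw [← Real.exp_add]; simp
    have hx1 : 4 * Real.exp (-(n*θ)) * D ≥ 4 * Real.exp (-(n*θ)) * (Real.exp (n*θ)/2) := by
      apply mul_le_mul_of_nonneg_left hDlb (by positivity)
    have hx2 : 4 * Real.exp (-(n*θ)) * (Real.exp (n*θ)/2) = 2 := by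
      rw [show 4 * Real.exp (-(n*θ)) * (Real.exp (n*θ)/2)
        = 2 * (Real.exp (-(n*θ)) * Real.exp (n*θ)) by ring, hmul]; ring
    have hx3 : 4 * Real.exp (-2 * n * s) * D ≥ 4 * Real.exp (-(n*θ)) * D := by
      apply mul_le_mul_of_nonneg_right ?_ hDpos.le
      nlinarith [hmono]
    linarith
  -- conclude
  refine csInf_le_of_le ?_ ?_ (le_trans hIle hfinal)
  · refine ⟨0, ?_⟩
    rintro r' ⟨p, -, -, hpn, hr'⟩
    rw [hr']
    exact setIntegral_nonneg measurableSet_Icc hpn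
  · exact ⟨P, hPdeg, hP0, hPnonneg, rfl⟩
end

section
/- Let μ be a probability measure on [0,1] with μ([0,x]) ≤ C/(−log x) for all x ∈ (0,1), where C > 0. Then there is a constant C' > 0 such that for all n ≥ 3, J(n,μ) ≤ C'/log n. -/
open MeasureTheory

/-- Sublogarithmic decay of `μ` near `0` gives `J(n,μ) ≤ C'/log n`. -/
theorem J_le_of_log_decay (μ : Measure ℝ) [IsProbabilityMeasure μ]
    (hμ : μ (Set.Icc (0 : ℝ) 1)ᶜ = 0)
    (C : ℝ) (hC : 0 < C)
    (hdecay : ∀ x ∈ Set.Ioo (0 : ℝ) 1, (μ (Set.Icc 0 x)).toReal ≤ C / (-Real.log x)) :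
    ∃ C' > 0, ∀ n : ℕ, 3 ≤ n → J n μ ≤ C' / Real.log n := by
  refine ⟨2 * C + 2, by positivity, fun n hn => ?_⟩
  have hn3 : (3 : ℝ) ≤ (n : ℝ) := by exact_mod_cast hn
  have hn0 : (0 : ℝ) < n := by linarith
  have hs0 : 0 < Real.sqrt n := Real.sqrt_pos.mpr hn0
  have hs1 : 1 < Real.sqrt n := by
    nlinarith [Real.sq_sqrt hn0.le, Real.sqrt_nonneg (n:ℝ)]
  have hlogn : 0 < Real.log n := Real.log_pos (by linarith)
  set z : ℝ := 1 / Real.sqrt n with hzdef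
  have hz0 : 0 < z := by positivity
  have hz1 : z < 1 := by
    rw [hzdef, div_lt_one hs0]; exact hs1
  -- the polynomial
  set p : Polynomial ℝ := (1 - Polynomial.X) ^ n with hp
  have heval : ∀ x : ℝ, p.eval x = (1 - x) ^ n := by
    intro x; simp [hp]
  have hdeg : p.natDegree ≤ n := by
    refine le_trans (Polynomial.natDegree_pow_le) ?_
    have h1 : (1 - Polynomial.X : Polynomial ℝ).natDegree ≤ 1 := by
      refine le_trans (Polynomial.natDegree_sub_le _ _) ?_
      simp
    calc n * (1 - Polynomial.X : Polynomial ℝ).natDegree ≤ n * 1 := Nat.mul_le_mul_left n h1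
      _ = n := Nat.mul_one n
  -- integrability
  have hcont : Continuous fun x : ℝ => (1 - x) ^ n := by continuity
  have hint : IntegrableOn (fun x : ℝ => (1 - x) ^ n) (Set.Icc 0 1) μ :=
    hcont.integrableOn_Icc
  -- split the integral
  have hsplit : Set.Icc (0:ℝ) z ∪ Set.Ioc z 1 = Set.Icc (0:ℝ) 1 :=
    Set.Icc_union_Ioc_eq_Icc hz0.le hz1.le
  have hdisj : Disjoint (Set.Icc (0:ℝ) z) (Set.Ioc z 1) := by
    apply Set.disjoint_left.mpr
    rintro x ⟨_, hxz⟩ ⟨hzx, _⟩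
    exact absurd hxz (not_le.mpr hzx)
  have hint1 : IntegrableOn (fun x : ℝ => (1 - x) ^ n) (Set.Icc 0 z) μ :=
    hint.mono_set (by rw [← hsplit]; exact Set.subset_union_left)
  have hint2 : IntegrableOn (fun x : ℝ => (1 - x) ^ n) (Set.Ioc z 1) μ :=
    hint.mono_set (by rw [← hsplit]; exact Set.subset_union_right)
  have hIsplit : ∫ x in Set.Icc (0:ℝ) 1, (1 - x) ^ n ∂μ
      = (∫ x in Set.Icc (0:ℝ) z, (1 - x) ^ n ∂μ) + ∫ x in Set.Ioc z 1, (1 - x) ^ n ∂μ := by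
    rw [← hsplit, setIntegral_union hdisj measurableSet_Ioc hint1 hint2]
  -- bound piece 1
  have hb1 : ∫ x in Set.Icc (0:ℝ) z, (1 - x) ^ n ∂μ ≤ (μ (Set.Icc 0 z)).toReal := by
    have : ∫ x in Set.Icc (0:ℝ) z, (1 - x) ^ n ∂μ ≤ ∫ _ in Set.Icc (0:ℝ) z, (1:ℝ) ∂μ := by
      refine setIntegral_mono_on hint1 ((integrableOn_const_iff).mpr (Or.inr (measure_lt_top _ _)))
        measurableSet_Icc ?_
      rintro x ⟨hx0, hxz⟩
      exact pow_le_one₀ (by linarith [hz1]) (by linarith [hz1])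
    simpa [Measure.real] using this
  -- bound piece 2
  have hb2 : ∫ x in Set.Ioc z 1, (1 - x) ^ n ∂μ ≤ (1 - z) ^ n := by
    have h1 : ∫ x in Set.Ioc z 1, (1 - x) ^ n ∂μ ≤ ∫ _ in Set.Ioc z 1, (1 - z) ^ n ∂μ := by
      refine setIntegral_mono_on hint2 ((integrableOn_const_iff).mpr (Or.inr (measure_lt_top _ _)))
        measurableSet_Ioc ?_
      rintro x ⟨hzx, hx1⟩
      exact pow_le_pow_left₀ (by linarith) (by linarith) n
    have h2 : ∫ _ in Set.Ioc z 1, (1 - z) ^ n ∂μ = (μ (Set.Ioc z 1)).toReal * (1 - z) ^ n := by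
      simp [setIntegral_const, smul_eq_mul, Measure.real]
    have h3 : (μ (Set.Ioc z 1)).toReal ≤ 1 := by
      calc (μ (Set.Ioc z 1)).toReal ≤ (1 : ENNReal).toReal :=
            ENNReal.toReal_mono (by simp) prob_le_one
        _ = 1 := by simp
    have h4 : (0:ℝ) ≤ (1 - z) ^ n := pow_nonneg (by linarith) n
    calc ∫ x in Set.Ioc z 1, (1 - x) ^ n ∂μ ≤ (μ (Set.Ioc z 1)).toReal * (1 - z) ^ n := by
          rw [← h2]; exact h1
      _ ≤ 1 * (1 - z) ^ n := mul_le_mul_of_nonneg_right h3 h4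
      _ = (1 - z) ^ n := one_mul _
  -- measure bound
  have hmeas : (μ (Set.Icc 0 z)).toReal ≤ 2 * C / Real.log n := by
    have := hdecay z ⟨hz0, hz1⟩
    have hlz : Real.log z = -(Real.log n / 2) := by
      rw [hzdef, one_div, Real.log_inv, Real.log_sqrt hn0.le]
    rw [hlz] at this
    calc (μ (Set.Icc 0 z)).toReal ≤ C / ( -( -(Real.log n / 2))) := this
      _ = 2 * C / Real.log n := by
          rw [neg_neg]; field_simp
  -- exponential bound
  have hexp : (1 - z) ^ n ≤ 2 / Real.log n := by
    have h1 : (1 - z) ^ n ≤ Real.exp (-z) ^ n := by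
      apply pow_le_pow_left₀ (by linarith)
      linarith [Real.add_one_le_exp (-z)]
    have h2 : Real.exp (-z) ^ n = Real.exp (-(Real.sqrt n)) := by
      rw [← Real.exp_nat_mul]
      congr 1
      rw [hzdef]
      have he : (n:ℝ) * -(1 / Real.sqrt n) = -((n:ℝ) / Real.sqrt n) := by ring
      rw [he, Real.div_sqrt]
    have h3 : Real.exp (-(Real.sqrt n)) ≤ 1 / Real.sqrt n := by
      rw [Real.exp_neg, inv_eq_one_div]
      apply one_div_le_one_div_of_le hs0
      linarith [Real.add_one_le_exp (Real.sqrt n)]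
    have h4 : 1 / Real.sqrt n ≤ 2 / Real.log n := by
      rw [div_le_div_iff₀ hs0 hlogn]
      have := Real.log_le_sub_one_of_pos hs0
      have hls : Real.log (Real.sqrt n) = Real.log n / 2 := Real.log_sqrt hn0.le
      nlinarith
    calc (1 - z) ^ n ≤ Real.exp (-z) ^ n := h1
      _ = Real.exp (-(Real.sqrt n)) := h2
      _ ≤ 1 / Real.sqrt n := h3
      _ ≤ 2 / Real.log n := h4
  -- J ≤ the integral
  have hmem : (∫ x in Set.Icc (0:ℝ) 1, (1 - x) ^ n ∂μ) ∈
      {r : ℝ | ∃ p : Polynomial ℝ, p.natDegree ≤ n ∧ p.eval 0 = 1 ∧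
        (∀ x ∈ Set.Icc (0 : ℝ) 1, 0 ≤ p.eval x) ∧
        r = ∫ x in Set.Icc (0 : ℝ) 1, p.eval x ∂μ} := by
    refine ⟨p, hdeg, by simp [heval 0], fun x hx => ?_, ?_⟩
    · rw [heval]; exact pow_nonneg (by linarith [hx.2]) n
    · simp only [heval]
  have hbdd : BddBelow {r : ℝ | ∃ p : Polynomial ℝ, p.natDegree ≤ n ∧ p.eval 0 = 1 ∧
        (∀ x ∈ Set.Icc (0 : ℝ) 1, 0 ≤ p.eval x) ∧
        r = ∫ x in Set.Icc (0 : ℝ) 1, p.eval x ∂μ} := by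
    refine ⟨0, ?_⟩
    rintro r ⟨q, _, _, hq, rfl⟩
    exact setIntegral_nonneg measurableSet_Icc hq
  have hJ : J n μ ≤ ∫ x in Set.Icc (0:ℝ) 1, (1 - x) ^ n ∂μ := csInf_le hbdd hmem
  calc J n μ ≤ ∫ x in Set.Icc (0:ℝ) 1, (1 - x) ^ n ∂μ := hJ
    _ = (∫ x in Set.Icc (0:ℝ) z, (1 - x) ^ n ∂μ) + ∫ x in Set.Ioc z 1, (1 - x) ^ n ∂μ := hIsplit
    _ ≤ 2 * C / Real.log n + 2 / Real.log n := add_le_add (hb1.trans hmeas) (hb2.trans hexp)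
    _ = (2 * C + 2) / Real.log n := by field_simp
end
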